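/- Define F(α; z) = Σ_{k≥0} z^k / (Γ(α+k) k!) for α > 0 and z ≥ 0. Then F(α; z)·F(α+1; z) + z·(F(α+2; z)·F(α; z) − F(α+1; z)²) > 0 for all z ≥ 0. -/

import Mathlib

open Finset

namespace Stmt7

noncomputable def poch (x : ℝ) (n : ℕ) : ℝ := ∏ i ∈ Finset.range n, (x + i)

lemma poch_zero (x : ℝ) : poch x 0 = 1 := by simp [poch]

lemma poch_succ (x : ℝ) (n : ℕ) : poch x (n+1) = poch x n * (x + n) := by
  simp [poch, Finset.prod_range_succ]

lemma poch_succ' (x : ℝ) (n : ℕ) : poch x (n+1) = x * poch (x+1) n := by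
  simp only [poch, Finset.prod_range_succ']
  rw [mul_comm]
  congr 1
  · norm_num
  · apply Finset.prod_congr rfl
    intro i _
    push_cast
    ring

lemma poch_pos {x : ℝ} (hx : 0 < x) (n : ℕ) : 0 < poch x n := by
  apply Finset.prod_pos
  intro i _
  positivity

lemma poch_ne_zero {x : ℝ} (hx : 0 < x) (n : ℕ) : poch x n ≠ 0 :=
  ne_of_gt (poch_pos hx n)

lemma poch_reflect (n : ℕ) : ∀ x : ℝ, poch x n = (-1)^n * poch (1 - x - n) n := by
  induction n with
  | zero => intro x; simp [poch_zero]
  | succ n ih =>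
    intro x
    have h1 : (1 : ℝ) - x - ((n:ℝ)+1) = -x - n := by ring
    push_cast
    rw [h1]
    have h2 : poch (-x - n) (n+1) = (-x - n) * poch (-x - n + 1) n := poch_succ' _ _
    have h3 : (-x - (n:ℝ) + 1) = 1 - x - n := by ring
    rw [poch_succ, h2, h3, ih x]
    ring

lemma chu (n : ℕ) : ∀ a b : ℝ,
    ∑ j ∈ range (n+1), (n.choose j : ℝ) * poch a j * poch b (n-j) = poch (a+b) n := by
  induction n with
  | zero => intro a b; simp [poch_zero]
  | succ n ih =>
    intro a b
    rw [Finset.sum_range_succ']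
    have hf0 : ((n+1).choose 0 : ℝ) * poch a 0 * poch b (n+1-0) = poch b (n+1) := by
      simp [poch_zero]
    rw [hf0]
    have hsplit : ∀ i ∈ range (n+1),
        ((n+1).choose (i+1) : ℝ) * poch a (i+1) * poch b (n+1-(i+1))
        = (n.choose i : ℝ) * poch a (i+1) * poch b (n-i)
          + (n.choose (i+1) : ℝ) * poch a (i+1) * poch b (n-i) := by
      intro i _
      rw [Nat.choose_succ_succ, Nat.succ_sub_succ]
      push_cast
      ring
    rw [Finset.sum_congr rfl hsplit, Finset.sum_add_distrib]
    -- second family plus head term reassembles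
    have hB : (∑ i ∈ range (n+1), (n.choose (i+1) : ℝ) * poch a (i+1) * poch b (n-i))
        + poch b (n+1)
        = ∑ j ∈ range (n+1), (n.choose j : ℝ) * poch a j * poch b (n+1-j) := by
      have h2 : ∑ j ∈ range (n+2), (n.choose j : ℝ) * poch a j * poch b (n+1-j)
          = (∑ i ∈ range (n+1), (n.choose (i+1) : ℝ) * poch a (i+1) * poch b (n+1-(i+1)))
            + (n.choose 0 : ℝ) * poch a 0 * poch b (n+1-0) := Finset.sum_range_succ' _ _
      have h3 : ∑ j ∈ range (n+2), (n.choose j : ℝ) * poch a j * poch b (n+1-j)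
          = (∑ j ∈ range (n+1), (n.choose j : ℝ) * poch a j * poch b (n+1-j))
            + (n.choose (n+1) : ℝ) * poch a (n+1) * poch b (n+1-(n+1)) :=
        Finset.sum_range_succ _ _
      rw [Nat.choose_succ_self] at h3
      simp only [Nat.cast_zero, zero_mul] at h3
      have h4 : ∀ i ∈ range (n+1), (n.choose (i+1) : ℝ) * poch a (i+1) * poch b (n+1-(i+1))
          = (n.choose (i+1) : ℝ) * poch a (i+1) * poch b (n-i) := by
        intro i _
        rw [Nat.succ_sub_succ]
      rw [Finset.sum_congr rfl h4] at h2
      simp only [Nat.choose_zero_right, Nat.cast_one, one_mul, poch_zero, Nat.sub_zero] at h2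
      rw [h2] at h3
      linarith [h3]
    rw [add_assoc, hB]
    have hterm : ∀ j ∈ range (n+1),
        (n.choose j : ℝ) * poch a (j+1) * poch b (n-j)
          + (n.choose j : ℝ) * poch a j * poch b (n+1-j)
        = ((n.choose j : ℝ) * poch a j * poch b (n-j)) * (a + b + n) := by
      intro j hj
      have hjn : j ≤ n := Nat.lt_succ_iff.mp (Finset.mem_range.mp hj)
      have h5 : n + 1 - j = (n - j) + 1 := by omega
      rw [h5, poch_succ a j, poch_succ b (n-j)]
      have h6 : ((n - j : ℕ) : ℝ) = (n : ℝ) - j := by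
        push_cast [Nat.cast_sub hjn]; ring
      rw [h6]
      ring
    rw [← Finset.sum_add_distrib, Finset.sum_congr rfl hterm, ← Finset.sum_mul, ih a b,
      poch_succ]

lemma vand (μ ν : ℝ) (n : ℕ) :
    ∑ k ∈ range (n+1), (n.choose k : ℝ) * poch (μ + k) (n-k) * poch (ν + (n-k : ℕ)) k
      = poch (μ + ν - 1 + n) n := by
  have hterm : ∀ k ∈ range (n+1),
      (n.choose k : ℝ) * poch (μ + k) (n-k) * poch (ν + (n-k : ℕ)) k
      = (-1:ℝ)^n * ((n.choose k : ℝ) * poch (1 - ν - n) k * poch (1 - μ - n) (n-k)) := by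
    intro k hk
    have hkn : k ≤ n := Nat.lt_succ_iff.mp (Finset.mem_range.mp hk)
    have hc : ((n - k : ℕ) : ℝ) = (n : ℝ) - k := by push_cast [Nat.cast_sub hkn]; ring
    have h1 : poch (μ + k) (n-k) = (-1:ℝ)^(n-k) * poch (1 - μ - n) (n-k) := by
      rw [poch_reflect (n-k) (μ + k), hc]
      congr 2
      ring
    have h2 : poch (ν + (n-k : ℕ)) k = (-1:ℝ)^k * poch (1 - ν - n) k := by
      rw [poch_reflect k (ν + (n-k:ℕ)), hc]
      congr 2
      ring
    have h3 : (-1:ℝ)^(n-k) * (-1:ℝ)^k = (-1:ℝ)^n := by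
      rw [← pow_add, Nat.sub_add_cancel hkn]
    rw [h1, h2, ← h3]
    ring
  rw [Finset.sum_congr rfl hterm, ← Finset.mul_sum, chu n (1 - ν - n) (1 - μ - n)]
  have h4 : (1 - ν - (n:ℝ)) + (1 - μ - n) = 2 - μ - ν - 2*n := by ring
  rw [h4, poch_reflect n (μ + ν - 1 + n)]
  have h5 : (1:ℝ) - (μ + ν - 1 + n) - n = 2 - μ - ν - 2*n := by ring
  rw [h5]

lemma Gamma_add_nat {x : ℝ} (hx : 0 < x) (n : ℕ) :
    Real.Gamma (x + n) = Real.Gamma x * poch x n := by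
  induction n with
  | zero => simp [poch_zero]
  | succ n ih =>
    have h1 : x + ((n:ℕ)+1 : ℕ) = (x + n) + 1 := by push_cast; ring
    rw [h1, Real.Gamma_add_one (by positivity), ih, poch_succ]
    ring

noncomputable def g (μ ν z : ℝ) (n : ℕ) : ℝ :=
  poch (μ + ν - 1 + n) n * z^n / (Real.Gamma (μ + n) * Real.Gamma (ν + n) * n.factorial)

lemma coeffSum {μ ν : ℝ} (hμ : 0 < μ) (hν : 0 < ν) (z : ℝ) (n : ℕ) :
    ∑ k ∈ range (n+1),
      z^k / (Real.Gamma (μ + k) * (k.factorial : ℝ))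
        * (z^(n-k) / (Real.Gamma (ν + ((n-k : ℕ) : ℝ)) * ((n-k).factorial : ℝ)))
      = g μ ν z n := by
  have hterm : ∀ k ∈ range (n+1),
      z^k / (Real.Gamma (μ + k) * (k.factorial : ℝ))
        * (z^(n-k) / (Real.Gamma (ν + ((n-k : ℕ) : ℝ)) * ((n-k).factorial : ℝ)))
      = z^n * ((n.choose k : ℝ) * poch (μ + k) (n-k) * poch (ν + (n-k : ℕ)) k)
          / (Real.Gamma (μ + n) * Real.Gamma (ν + n) * n.factorial) := by
    intro k hk
    have hkn : k ≤ n := Nat.lt_succ_iff.mp (Finset.mem_range.mp hk)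
    have hzp : z^k * z^(n-k) = z^n := by
      rw [← pow_add, Nat.add_sub_cancel' hkn]
    have hc : ((n - k : ℕ) : ℝ) = (n : ℝ) - k := by push_cast [Nat.cast_sub hkn]; ring
    have hμn : Real.Gamma (μ + n) = Real.Gamma (μ + k) * poch (μ + k) (n-k) := by
      have : μ + (n:ℝ) = (μ + k) + ((n-k : ℕ) : ℝ) := by rw [hc]; ring
      rw [this, Gamma_add_nat (by positivity)]
    have hνn : Real.Gamma (ν + n) = Real.Gamma (ν + ((n-k:ℕ):ℝ)) * poch (ν + (n-k:ℕ)) k := by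
      have : ν + (n:ℝ) = (ν + ((n-k : ℕ) : ℝ)) + (k : ℝ) := by rw [hc]; ring
      rw [this, Gamma_add_nat]
      rw [hc]
      have : (k:ℝ) ≤ n := by exact_mod_cast hkn
      linarith
    have hfact : (n.factorial : ℝ) = (n.choose k : ℝ) * k.factorial * (n-k).factorial := by
      exact_mod_cast congrArg (Nat.cast : ℕ → ℝ)
        (Nat.choose_mul_factorial_mul_factorial hkn).symm
    have hg1 : Real.Gamma (μ + k) ≠ 0 := ne_of_gt (Real.Gamma_pos_of_pos (by positivity))
    have hg2 : Real.Gamma (ν + ((n-k:ℕ):ℝ)) ≠ 0 := by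
      apply ne_of_gt (Real.Gamma_pos_of_pos _)
      rw [hc]
      have : (k:ℝ) ≤ n := by exact_mod_cast hkn
      linarith
    have hp1 : poch (μ + k) (n-k) ≠ 0 := poch_ne_zero (by positivity) _
    have hp2 : poch (ν + (n-k:ℕ)) k ≠ 0 := by
      apply poch_ne_zero
      rw [hc]
      have : (k:ℝ) ≤ n := by exact_mod_cast hkn
      linarith
    have hf1 : (k.factorial : ℝ) ≠ 0 := by positivity
    have hf2 : ((n-k).factorial : ℝ) ≠ 0 := by positivity
    have hC : (n.choose k : ℝ) ≠ 0 := Nat.cast_ne_zero.mpr (Nat.choose_pos hkn).ne'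
    rw [hμn, hνn, hfact, ← hzp]
    set G1 := Real.Gamma (μ + (k:ℝ)) with hG1def
    set G2 := Real.Gamma (ν + ((n-k:ℕ):ℝ)) with hG2def
    set P := poch (μ + (k:ℝ)) (n-k) with hPdef
    set Q := poch (ν + ((n-k:ℕ):ℝ)) k with hQdef
    field_simp
  rw [Finset.sum_congr rfl hterm, ← Finset.sum_div, ← Finset.mul_sum, vand μ ν n]
  unfold g
  ring

lemma summable_term {μ : ℝ} (hμ : 0 < μ) (z : ℝ) :
    Summable (fun k : ℕ => z^k / (Real.Gamma (μ + k) * (k.factorial : ℝ))) := by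
  apply summable_of_ratio_norm_eventually_le (r := 1/2) (by norm_num)
  filter_upwards [Filter.eventually_ge_atTop (⌈2*|z|⌉₊ + 1)] with k hk
  have hk' : 2*|z| ≤ (k:ℝ) := by
    have h1 : (⌈2*|z|⌉₊ : ℝ) ≤ k := by exact_mod_cast (by omega : ⌈2*|z|⌉₊ ≤ k)
    calc 2*|z| ≤ (⌈2*|z|⌉₊ : ℝ) := Nat.le_ceil _
    _ ≤ k := h1
  have hgpos : 0 < Real.Gamma (μ + k) := Real.Gamma_pos_of_pos (by positivity)
  have hrec : Real.Gamma (μ + ((k:ℕ)+1 : ℕ)) = (μ + k) * Real.Gamma (μ + k) := by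
    have h1 : μ + (((k:ℕ)+1 : ℕ) : ℝ) = (μ + k) + 1 := by push_cast; ring
    rw [h1, Real.Gamma_add_one (by positivity)]
  have hfrec : (((k+1).factorial : ℕ) : ℝ) = ((k:ℝ)+1) * k.factorial := by
    rw [Nat.factorial_succ]; push_cast; ring
  rw [Real.norm_eq_abs, Real.norm_eq_abs, abs_div, abs_div, abs_pow, abs_pow, hrec, hfrec]
  have hd1 : |(μ + (k:ℝ)) * Real.Gamma (μ + k) * (((k:ℝ)+1) * k.factorial)|
      = (μ + k) * Real.Gamma (μ + k) * (((k:ℝ)+1) * k.factorial) := by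
    apply abs_of_pos; positivity
  have hd2 : |Real.Gamma (μ + (k:ℝ)) * (k.factorial : ℝ)|
      = Real.Gamma (μ + k) * (k.factorial : ℝ) := by
    apply abs_of_pos; positivity
  rw [hd1, hd2]
  have heq : |z|^(k+1) / ((μ + (k:ℝ)) * Real.Gamma (μ + k) * (((k:ℝ)+1) * k.factorial))
      = (|z| / ((μ + k) * ((k:ℝ)+1))) * (|z|^k / (Real.Gamma (μ + k) * k.factorial)) := by
    rw [pow_succ]
    have h1 : (0:ℝ) < μ + k := by positivity
    have h2 : (0:ℝ) < (k:ℝ) + 1 := by positivity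
    have h3 : (0:ℝ) < (k.factorial : ℝ) := by positivity
    field_simp
  rw [heq]
  apply mul_le_mul_of_nonneg_right _ (by positivity)
  rw [div_le_iff₀ (by positivity)]
  nlinarith [abs_nonneg z, hk', hμ, Nat.cast_nonneg (α := ℝ) k]

lemma summable_norm_term {μ : ℝ} (hμ : 0 < μ) (z : ℝ) :
    Summable (fun k : ℕ => ‖z^k / (Real.Gamma (μ + k) * (k.factorial : ℝ))‖) := by
  apply (summable_term hμ |z|).congr
  intro k
  rw [Real.norm_eq_abs, abs_div, abs_pow]
  congr 1
  apply (abs_of_pos _).symm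
  have : 0 < Real.Gamma (μ + k) := Real.Gamma_pos_of_pos (by positivity)
  positivity

lemma antidiag_eq {μ ν : ℝ} (hμ : 0 < μ) (hν : 0 < ν) (z : ℝ) :
    (fun n : ℕ => ∑ kl ∈ Finset.HasAntidiagonal.antidiagonal n,
        (z^kl.1 / (Real.Gamma (μ + kl.1) * (kl.1.factorial : ℝ)))
          * (z^kl.2 / (Real.Gamma (ν + kl.2) * (kl.2.factorial : ℝ))))
      = g μ ν z := by
  funext n
  rw [Finset.Nat.sum_antidiagonal_eq_sum_range_succ_mk]
  exact coeffSum hμ hν z n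

lemma prodF {μ ν : ℝ} (hμ : 0 < μ) (hν : 0 < ν) (z : ℝ) :
    (∑' k : ℕ, z^k / (Real.Gamma (μ + k) * (k.factorial : ℝ)))
      * (∑' k : ℕ, z^k / (Real.Gamma (ν + k) * (k.factorial : ℝ)))
      = ∑' n : ℕ, g μ ν z n := by
  rw [tsum_mul_tsum_eq_tsum_sum_antidiagonal_of_summable_norm
      (summable_norm_term hμ z) (summable_norm_term hν z)]
  exact tsum_congr (fun n => congrFun (antidiag_eq hμ hν z) n)

lemma summable_g {μ ν : ℝ} (hμ : 0 < μ) (hν : 0 < ν) (z : ℝ) :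
    Summable (g μ ν z) := by
  rw [← antidiag_eq hμ hν z]
  exact (summable_norm_sum_mul_antidiagonal_of_summable_norm
    (summable_norm_term hμ z) (summable_norm_term hν z)).of_norm

lemma key {α z : ℝ} (hα : 0 < α) (hz : 0 ≤ z) (n : ℕ) :
    0 ≤ g α (α+1) z (n+1) + z * (g α (α+2) z n - g (α+1) (α+1) z n) := by
  have hgA : 0 < Real.Gamma (α + n) := Real.Gamma_pos_of_pos (by positivity)
  have hgB : 0 < Real.Gamma (α + 1 + n) := Real.Gamma_pos_of_pos (by positivity)
  have hgC : 0 < Real.Gamma (α + 2 + n) := Real.Gamma_pos_of_pos (by positivity)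
  have hpoch : 0 < poch (2*α + 1 + n) n := poch_pos (by positivity) n
  have hrecB : Real.Gamma (α + 1 + n) = (α + n) * Real.Gamma (α + n) := by
    rw [show α + 1 + (n:ℝ) = (α + n) + 1 by ring, Real.Gamma_add_one (by positivity)]
  have hrecC : Real.Gamma (α + 2 + n) = (α + 1 + n) * Real.Gamma (α + 1 + n) := by
    rw [show α + 2 + (n:ℝ) = (α + 1 + n) + 1 by ring, Real.Gamma_add_one (by positivity)]
  have heq : g α (α+1) z (n+1) + z * (g α (α+2) z n - g (α+1) (α+1) z n)
      = (2*α + n) * poch (2*α + 1 + n) n * z^(n+1)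
        / (((n:ℝ)+1) * n.factorial * ((α + n) * Real.Gamma (α+n))
            * ((α + 1 + n) * ((α + n) * Real.Gamma (α+n)))) := by
    unfold g
    rw [show ((n+1 : ℕ) : ℝ) = (n:ℝ) + 1 by push_cast; ring]
    rw [show α + (α+1) - 1 + ((n:ℝ)+1) = 2*α + 1 + (n:ℝ) by ring]
    rw [show α + (α+2) - 1 + (n:ℝ) = 2*α + 1 + (n:ℝ) by ring]
    rw [show (α+1) + (α+1) - 1 + (n:ℝ) = 2*α + 1 + (n:ℝ) by ring]
    rw [poch_succ]
    rw [show α + ((n:ℝ)+1) = α + 1 + (n:ℝ) by ring]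
    rw [show α + 1 + ((n:ℝ)+1) = α + 2 + (n:ℝ) by ring]
    rw [hrecC, hrecB]
    rw [show (((n+1).factorial : ℕ) : ℝ) = ((n:ℝ)+1) * n.factorial by
      rw [Nat.factorial_succ]; push_cast; ring]
    have hf : (0:ℝ) < n.factorial := by positivity
    have h1 : (0:ℝ) < α + n := by positivity
    have h2 : (0:ℝ) < α + 1 + n := by positivity
    have h3 : (0:ℝ) < (n:ℝ) + 1 := by positivity
    rw [pow_succ]
    field_simp
    ring
  rw [heq]
  positivity

end Stmt7

open Stmt7 in
/-- For `F(α;z) = Σ_{k≥0} z^k/(Γ(α+k) k!)`, one has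
`F(α;z)F(α+1;z) + z(F(α+2;z)F(α;z) − F(α+1;z)²) > 0` for all `z ≥ 0`. -/
theorem stmt_7 (α : ℝ) (hα : 0 < α)
    (F : ℝ → ℝ → ℝ)
    (hF : ∀ β z, F β z = ∑' k : ℕ, z ^ k / (Real.Gamma (β + k) * (Nat.factorial k))) :
    ∀ z ≥ (0:ℝ),
      0 < F α z * F (α + 1) z + z * (F (α + 2) z * F α z - (F (α + 1) z) ^ 2) := by
  intro z hz
  have hα1 : (0:ℝ) < α + 1 := by linarith
  have hα2 : (0:ℝ) < α + 2 := by linarith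
  simp only [hF]
  rw [sq, mul_comm (∑' k : ℕ, z ^ k / (Real.Gamma (α + 2 + k) * (Nat.factorial k)))]
  rw [prodF hα hα1 z, prodF hα hα2 z, prodF hα1 hα1 z]
  have S1 : Summable (g α (α+1) z) := summable_g hα hα1 z
  have S2 : Summable (g α (α+2) z) := summable_g hα hα2 z
  have S3 : Summable (g (α+1) (α+1) z) := summable_g hα1 hα1 z
  have S23 : Summable (fun n => z * (g α (α+2) z n - g (α+1) (α+1) z n)) :=
    (S2.sub S3).mul_left z
  have S1' : Summable (fun n => g α (α+1) z (n+1)) :=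
    (summable_nat_add_iff 1).mpr S1
  have main : (∑' n, g α (α+1) z n)
      + z * ((∑' n, g α (α+2) z n) - ∑' n, g (α+1) (α+1) z n)
      = g α (α+1) z 0
        + ∑' n, (g α (α+1) z (n+1) + z * (g α (α+2) z n - g (α+1) (α+1) z n)) := by
    rw [← Summable.tsum_sub S2 S3, ← tsum_mul_left, Summable.tsum_eq_zero_add S1, add_assoc,
      ← Summable.tsum_add S1' S23]
  rw [main]
  have hGa : 0 < Real.Gamma α := Real.Gamma_pos_of_pos hα
  have hGa1 : 0 < Real.Gamma (α + 1) := Real.Gamma_pos_of_pos hα1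
  have h0 : 0 < g α (α+1) z 0 := by
    unfold g
    norm_num [poch_zero]
    positivity
  have ht : 0 ≤ ∑' n, (g α (α+1) z (n+1) + z * (g α (α+2) z n - g (α+1) (α+1) z n)) :=
    tsum_nonneg (fun n => key hα hz n)
  linarith
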